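/- Let A be a formally real integral domain which is an ℝ-algebra. Let I₀ be an imaginary unit, let h = h₀ + h₁·ι(I₀) with h₀, h₁ ∈ A and h₁ ≠ 0, and let f ∈ Quaternion A be not I₀-sliced. Then h * f * star h is not I₀-sliced. (Claim established in the proof of Theorem 5.6: when the conjugator h preserves the slice ℂ_{I₀} and f does not, the case ℂ_{I₀} = ℂ_{M₀} cannot occur.) -/

import Mathlib

open Quaternion

/-- The componentwise extension `ι : ℍ[ℝ] → ℍ[A]` of `algebraMap ℝ A`. -/
noncomputable def qmap {A : Type*} [CommRing A] [Algebra ℝ A] (q : Quaternion ℝ) :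
    Quaternion A :=
  ⟨algebraMap ℝ A q.re, algebraMap ℝ A q.imI, algebraMap ℝ A q.imJ, algebraMap ℝ A q.imK⟩

/-- An imaginary unit: a real quaternion with zero real part squaring to `-1`. -/
def IsImaginaryUnit (I : Quaternion ℝ) : Prop := I.re = 0 ∧ I ^ 2 = -1

/-- `q` is `I`-sliced if `q = a + b·ι(I)` for some `a, b ∈ A`. -/
noncomputable def IsSliced {A : Type*} [CommRing A] [Algebra ℝ A]
    (I : Quaternion ℝ) (q : Quaternion A) : Prop :=
  ∃ a b : A, q = (a : Quaternion A) + (b : Quaternion A) * qmap I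

/-- The vector parts of `I` and `M` are orthogonal in `ℝ³`. -/
def OrthIm (I M : Quaternion ℝ) : Prop :=
  I.imI * M.imI + I.imJ * M.imJ + I.imK * M.imK = 0

/-- `A` is formally real: a sum of four squares vanishes only trivially. -/
def FormallyRealFour (A : Type*) [CommRing A] : Prop :=
  ∀ a b c d : A, a ^ 2 + b ^ 2 + c ^ 2 + d ^ 2 = 0 → a = 0 ∧ b = 0 ∧ c = 0 ∧ d = 0

section Aux

variable {A : Type*} [CommRing A] [Algebra ℝ A]

@[simp] lemma qmap_re (q : Quaternion ℝ) : (qmap q : Quaternion A).re = algebraMap ℝ A q.re := rfl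
@[simp] lemma qmap_imI (q : Quaternion ℝ) : (qmap q : Quaternion A).imI = algebraMap ℝ A q.imI := rfl
@[simp] lemma qmap_imJ (q : Quaternion ℝ) : (qmap q : Quaternion A).imJ = algebraMap ℝ A q.imJ := rfl
@[simp] lemma qmap_imK (q : Quaternion ℝ) : (qmap q : Quaternion A).imK = algebraMap ℝ A q.imK := rfl

lemma sum_sq_aux (I₀ : Quaternion ℝ) (hI₀ : IsImaginaryUnit I₀) :
    (algebraMap ℝ A I₀.imI) ^ 2 + (algebraMap ℝ A I₀.imJ) ^ 2 +
      (algebraMap ℝ A I₀.imK) ^ 2 = 1 := by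
  have h1 : I₀.imI ^ 2 + I₀.imJ ^ 2 + I₀.imK ^ 2 = 1 := by
    have := congrArg QuaternionAlgebra.re hI₀.2
    simp [pow_two, Quaternion.re_mul, hI₀.1] at this
    nlinarith [this]
  have : algebraMap ℝ A (I₀.imI ^ 2 + I₀.imJ ^ 2 + I₀.imK ^ 2) = algebraMap ℝ A 1 := by
    rw [h1]
  simpa [map_add, map_pow] using this

lemma qmul_aux (I₀ : Quaternion ℝ) (hI₀ : IsImaginaryUnit I₀) (a b c d : A) :
    ((a : Quaternion A) + (b : Quaternion A) * qmap I₀) *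
      ((c : Quaternion A) + (d : Quaternion A) * qmap I₀)
    = ((a * c - b * d : A) : Quaternion A) +
      ((a * d + b * c : A) : Quaternion A) * qmap I₀ := by
  have hs := sum_sq_aux (A := A) I₀ hI₀
  ext <;>
    simp [qmap_re, qmap_imI, qmap_imJ, qmap_imK, Quaternion.re_mul, Quaternion.imI_mul, Quaternion.imJ_mul,
      Quaternion.imK_mul, hI₀.1] <;>
    first
      | ring1
      | linear_combination (b * d) * hs
      | linear_combination (-(b * d)) * hs

lemma star_aux (I₀ : Quaternion ℝ) (hI₀ : IsImaginaryUnit I₀) (a b : A) :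
    star ((a : Quaternion A) + (b : Quaternion A) * qmap I₀)
      = (a : Quaternion A) + ((-b : A) : Quaternion A) * qmap I₀ := by
  ext <;> simp [qmap_re, qmap_imI, qmap_imJ, qmap_imK, hI₀.1, Quaternion.re_mul, Quaternion.imI_mul, Quaternion.imJ_mul,
    Quaternion.imK_mul] <;> ring

end Aux

theorem conjugation_by_sliced_not_sliced
    {A : Type*} [CommRing A] [IsDomain A] [Algebra ℝ A] (hFR : FormallyRealFour A)
    (I₀ : Quaternion ℝ) (hI₀ : IsImaginaryUnit I₀)
    (h₀ h₁ : A) (hh₁ : h₁ ≠ 0) (h : Quaternion A)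
    (hh : h = (h₀ : Quaternion A) + (h₁ : Quaternion A) * qmap I₀)
    (f : Quaternion A) (hf : ¬ IsSliced I₀ f) :
    ¬ IsSliced I₀ (h * f * star h) := by
  set c₁ : A := algebraMap ℝ A I₀.imI with hc₁
  set c₂ : A := algebraMap ℝ A I₀.imJ with hc₂
  set c₃ : A := algebraMap ℝ A I₀.imK with hc₃
  have hs : c₁ ^ 2 + c₂ ^ 2 + c₃ ^ 2 = 1 := sum_sq_aux I₀ hI₀
  set n : A := h₀ * h₀ + h₁ * h₁ with hn
  have hn0 : n ≠ 0 := by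
    intro h0
    have := hFR h₀ h₁ 0 0 (by rw [hn] at h0; linear_combination h0)
    exact hh₁ this.2.1
  have hnn : n * n ≠ 0 := mul_ne_zero hn0 hn0
  -- star h
  have hstar : star h = (h₀ : Quaternion A) + ((-h₁ : A) : Quaternion A) * qmap I₀ := by
    rw [hh]; exact star_aux I₀ hI₀ h₀ h₁
  have hsh : star h * h = ((n : A) : Quaternion A) := by
    rw [hstar, hh, qmul_aux I₀ hI₀]
    have e1 : h₀ * h₀ - -h₁ * h₁ = n := by rw [hn]; ring
    have e2 : h₀ * h₁ + -h₁ * h₀ = 0 := by ring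
    rw [e1, e2]
    simp
  rintro ⟨a, b, hab⟩
  -- key identity
  have key : ((n * n : A) : Quaternion A) * f
      = ((n * a : A) : Quaternion A) + ((n * b : A) : Quaternion A) * qmap I₀ := by
    have e1 : star h * (h * f * star h) * h = ((n * n : A) : Quaternion A) * f := by
      calc star h * (h * f * star h) * h
          = (star h * h) * (f * (star h * h)) := by simp only [mul_assoc]
        _ = ((n : A) : Quaternion A) * (f * ((n : A) : Quaternion A)) := by rw [hsh]
        _ = ((n * n : A) : Quaternion A) * f := by
            rw [← Quaternion.coe_commutes, ← mul_assoc, ← Quaternion.coe_mul]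
    have e2 : star h * (h * f * star h) * h
        = ((n * a : A) : Quaternion A) + ((n * b : A) : Quaternion A) * qmap I₀ := by
      rw [hab, hstar, hh, qmul_aux I₀ hI₀, qmul_aux I₀ hI₀]
      have u1 : (h₀ * a - -h₁ * b) * h₀ - (h₀ * b + -h₁ * a) * h₁ = n * a := by
        rw [hn]; ring
      have u2 : (h₀ * a - -h₁ * b) * h₁ + (h₀ * b + -h₁ * a) * h₀ = n * b := by
        rw [hn]; ring
      rw [u1, u2]
    rw [← e1, e2]
  -- componentwise consequences
  have k1 : n * n * f.imI = n * b * c₁ := by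
    have := congrArg QuaternionAlgebra.imI key
    simpa [qmap_re, qmap_imI, qmap_imJ, qmap_imK, Quaternion.imI_mul, ← hc₁, ← hc₂, ← hc₃] using this
  have k2 : n * n * f.imJ = n * b * c₂ := by
    have := congrArg QuaternionAlgebra.imJ key
    simpa [qmap_re, qmap_imI, qmap_imJ, qmap_imK, Quaternion.imJ_mul, ← hc₁, ← hc₂, ← hc₃] using this
  have k3 : n * n * f.imK = n * b * c₃ := by
    have := congrArg QuaternionAlgebra.imK key
    simpa [qmap_re, qmap_imI, qmap_imJ, qmap_imK, Quaternion.imK_mul, ← hc₁, ← hc₂, ← hc₃] using this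
  -- produce a slicing of f
  refine hf ⟨f.re, f.imI * c₁ + f.imJ * c₂ + f.imK * c₃, ?_⟩
  ext
  · simp [qmap_re, qmap_imI, qmap_imJ, qmap_imK, Quaternion.re_mul, hI₀.1]
  · have : n * n * f.imI = n * n * ((f.imI * c₁ + f.imJ * c₂ + f.imK * c₃) * c₁) := by
      linear_combination (1 - c₁ ^ 2) * k1 - c₂ * c₁ * k2 - c₃ * c₁ * k3 - n * b * c₁ * hs
    have := mul_left_cancel₀ hnn this
    simpa [qmap_re, qmap_imI, qmap_imJ, qmap_imK, Quaternion.imI_mul, hI₀.1, ← hc₁, ← hc₂, ← hc₃] using this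
  · have : n * n * f.imJ = n * n * ((f.imI * c₁ + f.imJ * c₂ + f.imK * c₃) * c₂) := by
      linear_combination (1 - c₂ ^ 2) * k2 - c₁ * c₂ * k1 - c₃ * c₂ * k3 - n * b * c₂ * hs
    have := mul_left_cancel₀ hnn this
    simpa [qmap_re, qmap_imI, qmap_imJ, qmap_imK, Quaternion.imJ_mul, hI₀.1, ← hc₁, ← hc₂, ← hc₃] using this
  · have : n * n * f.imK = n * n * ((f.imI * c₁ + f.imJ * c₂ + f.imK * c₃) * c₃) := by
      linear_combination (1 - c₃ ^ 2) * k3 - c₁ * c₃ * k1 - c₂ * c₃ * k2 - n * b * c₃ * hs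
    have := mul_left_cancel₀ hnn this
    simpa [qmap_re, qmap_imI, qmap_imJ, qmap_imK, Quaternion.imK_mul, hI₀.1, ← hc₁, ← hc₂, ← hc₃] using this
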